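/- Let F be a finite field, Ω finite, ω : Ω → ℝ⁺. An F-linear automorphism φ of F^Ω preserves ω-weight (wt(φ(α)) = wt(α) for all α) if and only if there exists a bijection λ : Ω → Ω with ω(i) = ω(λ(i)) for all i ∈ Ω and supp(φ(α)) = λ[supp(α)] for all α ∈ F^Ω. -/

import Mathlib

open scoped Classical
open Finset

/-- ω-weight of a vector β ∈ F^Ω. -/
noncomputable def wwt {F Ω : Type*} [Field F] [Fintype Ω] (ω : Ω → ℝ) (β : Ω → F) : ℝ :=
  ∑ i ∈ univ.filter (fun i => β i ≠ 0), ω i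

/-- ω-weight of a set A ⊆ F^Ω. -/
noncomputable def WWt {F Ω : Type*} [Field F] [Fintype Ω] (ω : Ω → ℝ) (A : Set (Ω → F)) : ℝ :=
  ∑ i ∈ univ.filter (fun i => ∃ β ∈ A, β i ≠ 0), ω i
set_option linter.unusedSectionVars false

section Helpers

variable {F Ω : Type*} [Field F] [Fintype F] [Fintype Ω]

lemma wwt_eq_sum (ω : Ω → ℝ) (β : Ω → F) :
    wwt ω β = ∑ i, if β i ≠ 0 then ω i else 0 := by
  rw [wwt, Finset.sum_filter]

lemma inner_count (x y : F) (c : ℝ) :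
    ∑ a : F, (if x + a * y ≠ 0 then c else 0)
      = if y ≠ 0 then ((Fintype.card F : ℝ) - 1) * c
        else if x ≠ 0 then (Fintype.card F : ℝ) * c else 0 := by
  rw [← Finset.sum_filter, Finset.sum_const, nsmul_eq_mul]
  by_cases hy : y ≠ 0
  · rw [if_pos hy]
    have h1 : univ.filter (fun a : F => ¬ (x + a * y ≠ 0)) = {-x / y} := by
      ext a
      simp only [Finset.mem_filter, Finset.mem_univ, true_and, not_not, Finset.mem_singleton]
      constructor
      · intro h
        field_simp
        linear_combination h
      · intro h
        subst h
        field_simp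
        ring
    have h2 := Finset.card_filter_add_card_filter_not (s := (univ : Finset F))
      (p := fun a : F => x + a * y ≠ 0)
    rw [h1] at h2
    simp only [Finset.card_singleton, Finset.card_univ] at h2
    have : (univ.filter (fun a : F => x + a * y ≠ 0)).card = Fintype.card F - 1 := by omega
    rw [this]
    have hq : 1 ≤ Fintype.card F := Fintype.card_pos
    push_cast [this, Nat.cast_sub hq]
    ring
  · rw [if_neg hy]
    push_neg at hy
    subst hy
    by_cases hx : x ≠ 0
    · rw [if_pos hx]
      have : univ.filter (fun a : F => x + a * 0 ≠ 0) = univ := by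
        ext a; simp [hx]
      rw [this, Finset.card_univ]
    · push_neg at hx
      subst hx
      simp

lemma key_sum (ω : Ω → ℝ) (α β : Ω → F) :
    ∑ a : F, wwt ω (α + a • β)
      = ((Fintype.card F : ℝ) - 1) * wwt ω β
        + (Fintype.card F : ℝ) * ∑ i ∈ univ.filter (fun i => β i = 0 ∧ α i ≠ 0), ω i := by
  have h1 : ∀ a : F, wwt ω (α + a • β) = ∑ i, if α i + a * β i ≠ 0 then ω i else 0 := by
    intro a
    rw [wwt_eq_sum]
    apply Finset.sum_congr rfl
    intro i _
    simp [Pi.add_apply, Pi.smul_apply, smul_eq_mul]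
  calc ∑ a : F, wwt ω (α + a • β)
      = ∑ a : F, ∑ i, (if α i + a * β i ≠ 0 then ω i else 0) := by
        exact Finset.sum_congr rfl (fun a _ => h1 a)
    _ = ∑ i, ∑ a : F, (if α i + a * β i ≠ 0 then ω i else 0) := Finset.sum_comm
    _ = ∑ i, (if β i ≠ 0 then ((Fintype.card F : ℝ) - 1) * ω i
          else if α i ≠ 0 then (Fintype.card F : ℝ) * ω i else 0) := by
        exact Finset.sum_congr rfl (fun i _ => inner_count (α i) (β i) (ω i))
    _ = ((Fintype.card F : ℝ) - 1) * wwt ω β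
        + (Fintype.card F : ℝ) * ∑ i ∈ univ.filter (fun i => β i = 0 ∧ α i ≠ 0), ω i := by
        rw [wwt_eq_sum, Finset.mul_sum, Finset.mul_sum, Finset.sum_filter,
          ← Finset.sum_add_distrib]
        apply Finset.sum_congr rfl
        intro i _
        by_cases hb : β i ≠ 0
        · rw [if_pos hb, if_pos hb]
          have : ¬ (β i = 0 ∧ α i ≠ 0) := fun h => hb h.1
          rw [if_neg this]
          ring
        · rw [if_neg hb, if_neg hb]
          push_neg at hb
          by_cases ha : α i ≠ 0
          · rw [if_pos ha, if_pos ⟨hb, ha⟩]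
            ring
          · rw [if_neg ha, if_neg (fun h => ha h.2)]
            ring

lemma inter_preserved (ω : Ω → ℝ) (φ : (Ω → F) ≃ₗ[F] (Ω → F))
    (hw : ∀ α : Ω → F, wwt ω (φ α) = wwt ω α) (α β : Ω → F) :
    ∑ i ∈ univ.filter (fun i => φ α i ≠ 0 ∧ φ β i ≠ 0), ω i
      = ∑ i ∈ univ.filter (fun i => α i ≠ 0 ∧ β i ≠ 0), ω i := by
  have hq : (0:ℝ) < (Fintype.card F : ℝ) := by
    exact_mod_cast Fintype.card_pos
  have hS : ∑ i ∈ univ.filter (fun i => φ β i = 0 ∧ φ α i ≠ 0), ω i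
      = ∑ i ∈ univ.filter (fun i => β i = 0 ∧ α i ≠ 0), ω i := by
    have h1 : ∑ a : F, wwt ω (φ α + a • φ β) = ∑ a : F, wwt ω (α + a • β) := by
      apply Finset.sum_congr rfl
      intro a _
      rw [← map_smul, ← map_add]
      exact hw _
    rw [key_sum, key_sum, hw β] at h1
    have h2 : (Fintype.card F : ℝ) * ∑ i ∈ univ.filter (fun i => φ β i = 0 ∧ φ α i ≠ 0), ω i
        = (Fintype.card F : ℝ) * ∑ i ∈ univ.filter (fun i => β i = 0 ∧ α i ≠ 0), ω i := by
      linarith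
    exact mul_left_cancel₀ (ne_of_gt hq) h2
  have hsplit : ∀ γ δ : Ω → F, wwt ω γ
      = (∑ i ∈ univ.filter (fun i => δ i = 0 ∧ γ i ≠ 0), ω i)
        + ∑ i ∈ univ.filter (fun i => γ i ≠ 0 ∧ δ i ≠ 0), ω i := by
    intro γ δ
    rw [wwt_eq_sum, Finset.sum_filter, Finset.sum_filter, ← Finset.sum_add_distrib]
    apply Finset.sum_congr rfl
    intro i _
    by_cases hg : γ i ≠ 0 <;> by_cases hd : δ i = 0 <;>
      simp_all <;> tauto
  have e1 := hsplit (φ α) (φ β)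
  have e2 := hsplit α β
  have e3 := hw α
  linarith

end Helpers

theorem stmt5 {F Ω : Type*} [Field F] [Fintype F] [Fintype Ω] [Nonempty Ω]
    (ω : Ω → ℝ) (hω : ∀ i, 0 < ω i)
    (φ : (Ω → F) ≃ₗ[F] (Ω → F)) :
    (∀ α : Ω → F, wwt ω (φ α) = wwt ω α) ↔
      ∃ l : Equiv.Perm Ω, (∀ i : Ω, ω i = ω (l i)) ∧
        ∀ α : Ω → F, {i | φ α i ≠ 0} = l '' {i | α i ≠ 0} := by
  constructor
  · intro hw
    set e : Ω → (Ω → F) := fun j i => if j = i then 1 else 0 with he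
    have he_ne : ∀ j i : Ω, e j i ≠ 0 ↔ i = j := by
      intro j i
      by_cases h : j = i <;> simp [he, h, eq_comm]
    have hwe : ∀ j, wwt ω (e j) = ω j := by
      intro j
      rw [wwt]
      have : univ.filter (fun i => e j i ≠ 0) = {j} := by
        ext i; simp [he_ne]
      rw [this, Finset.sum_singleton]
    set s : Ω → Finset Ω := fun j => univ.filter (fun i => φ (e j) i ≠ 0) with hs
    have hwts : ∀ j, ∑ i ∈ s j, ω i = ω j := by
      intro j
      rw [hs, ← wwt, hw, hwe]
    have hone : ∀ j, 1 ≤ (s j).card := by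
      intro j
      rcases Finset.eq_empty_or_nonempty (s j) with h | h
      · exfalso
        have := hwts j
        rw [h, Finset.sum_empty] at this
        exact absurd this.symm (ne_of_gt (hω j))
      · exact Finset.Nonempty.card_pos h
    have hdisj : ∀ j k, j ≠ k → Disjoint (s j) (s k) := by
      intro j k hjk
      have h0 := inter_preserved ω φ hw (e j) (e k)
      have hr : univ.filter (fun i => e j i ≠ 0 ∧ e k i ≠ 0) = ∅ := by
        ext i
        simp only [Finset.mem_filter, Finset.mem_univ, true_and, Finset.notMem_empty,
          iff_false, he_ne]
        rintro ⟨rfl, rfl⟩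
        exact hjk rfl
      rw [hr, Finset.sum_empty] at h0
      have hempty : univ.filter (fun i => φ (e j) i ≠ 0 ∧ φ (e k) i ≠ 0) = ∅ := by
        by_contra hne
        rcases Finset.nonempty_iff_ne_empty.mpr hne with ⟨i, hi⟩
        have hpos : 0 < ∑ i ∈ univ.filter (fun i => φ (e j) i ≠ 0 ∧ φ (e k) i ≠ 0), ω i :=
          Finset.sum_pos (fun i _ => hω i) ⟨i, hi⟩
        rw [h0] at hpos
        exact lt_irrefl _ hpos
      rw [Finset.disjoint_left]
      intro i hij hik
      have : i ∈ univ.filter (fun i => φ (e j) i ≠ 0 ∧ φ (e k) i ≠ 0) := by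
        simp only [hs, Finset.mem_filter, Finset.mem_univ, true_and] at hij hik ⊢
        exact ⟨hij, hik⟩
      rw [hempty] at this
      exact absurd this (Finset.notMem_empty i)
    have hcard : ∀ j, (s j).card = 1 := by
      by_contra hne
      push_neg at hne
      rcases hne with ⟨j0, hj0⟩
      have h2 : 1 < (s j0).card := lt_of_le_of_ne (hone j0) (Ne.symm hj0)
      have hlt : ∑ _j : Ω, 1 < ∑ j : Ω, (s j).card :=
        Finset.sum_lt_sum (fun i _ => hone i) ⟨j0, Finset.mem_univ _, h2⟩
      have hsum : ∑ j : Ω, (s j).card = (univ.biUnion s).card :=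
        (Finset.card_biUnion (fun j _ k _ hjk => hdisj j k hjk)).symm
      have hle : (univ.biUnion s).card ≤ Fintype.card Ω := Finset.card_le_univ _
      simp only [Finset.sum_const, Finset.card_univ, smul_eq_mul, mul_one] at hlt
      omega
    choose σ hσ using fun j => Finset.card_eq_one.mp (hcard j)
    have hmem : ∀ j i, φ (e j) i ≠ 0 ↔ i = σ j := by
      intro j i
      constructor
      · intro h
        have : i ∈ s j := by simp [hs, h]
        rw [hσ j] at this
        exact Finset.mem_singleton.mp this
      · rintro rfl
        have : σ j ∈ s j := by rw [hσ j]; exact Finset.mem_singleton_self _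
        simp only [hs, Finset.mem_filter] at this
        exact this.2
    have hσinj : Function.Injective σ := by
      intro j k hjk
      by_contra hne
      have hd := hdisj j k hne
      rw [Finset.disjoint_left] at hd
      have h1 : σ j ∈ s j := by rw [hσ j]; exact Finset.mem_singleton_self _
      have h2 : σ j ∈ s k := by rw [hjk, hσ k]; exact Finset.mem_singleton_self _
      exact hd h1 h2
    set l : Equiv.Perm Ω := Equiv.ofBijective σ (Finite.injective_iff_bijective.mp hσinj)
      with hl
    have hlapp : ∀ j, l j = σ j := fun j => rfl
    refine ⟨l, ?_, ?_⟩
    · intro j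
      have h1 := hwts j
      rw [hσ j, Finset.sum_singleton] at h1
      rw [hlapp, h1]
    · intro α
      set d : Ω → F := fun j => φ (e j) (σ j) with hd
      have hdne : ∀ j, d j ≠ 0 := fun j => (hmem j (σ j)).mpr rfl
      have hφval : ∀ i, φ α i = α (l.symm i) * d (l.symm i) := by
        intro i
        have hα : α = ∑ j, α j • e j := pi_eq_sum_univ α
        have : φ α i = ∑ j, α j * (φ (e j) i) := by
          conv_lhs => rw [hα]
          rw [map_sum]
          simp only [map_smul]
          rw [Finset.sum_apply]
          simp [smul_eq_mul]
        rw [this]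
        have hσsymm : σ (l.symm i) = i := l.apply_symm_apply i
        rw [Finset.sum_eq_single (l.symm i)]
        · show α (l.symm i) * φ (e (l.symm i)) i
            = α (l.symm i) * φ (e (l.symm i)) (σ (l.symm i))
          rw [hσsymm]
        · intro j _ hj
          have hz : φ (e j) i = 0 := by
            by_contra h
            have hij := (hmem j i).mp h
            have h2 : σ (l.symm i) = σ j := by rw [hσsymm, hij]
            exact hj (hσinj h2).symm
          rw [hz, mul_zero]
        · intro h
          exact absurd (Finset.mem_univ _) h
      ext i
      simp only [Set.mem_setOf_eq, Equiv.image_eq_preimage_symm, Set.mem_preimage]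
      rw [hφval i]
      constructor
      · intro h
        exact fun hz => h (by rw [hz, zero_mul])
      · intro h
        exact mul_ne_zero h (hdne _)
  · rintro ⟨l, hl, hsupp⟩ α
    have hiff : ∀ i, φ α i ≠ 0 ↔ α (l.symm i) ≠ 0 := by
      intro i
      have := hsupp α
      rw [Equiv.image_eq_preimage_symm] at this
      have h2 : i ∈ {i | φ α i ≠ 0} ↔ i ∈ l.symm ⁻¹' {i | α i ≠ 0} := by rw [this]
      simpa using h2
    rw [wwt_eq_sum, wwt_eq_sum]
    calc ∑ i, (if φ α i ≠ 0 then ω i else 0)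
        = ∑ i, (if α (l.symm i) ≠ 0 then ω i else 0) := by
          apply Finset.sum_congr rfl
          intro i _
          by_cases h : φ α i ≠ 0
          · rw [if_pos h, if_pos ((hiff i).mp h)]
          · rw [if_neg h, if_neg (fun hh => h ((hiff i).mpr hh))]
      _ = ∑ j, (if α j ≠ 0 then ω (l j) else 0) := by
          apply Fintype.sum_equiv l.symm
          intro j
          simp
      _ = ∑ j, (if α j ≠ 0 then ω j else 0) := by
          apply Finset.sum_congr rfl
          intro j _
          by_cases h : α j ≠ 0
          · rw [if_pos h, if_pos h, ← hl]
          · rw [if_neg h, if_neg h]
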